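/- Let X be a compact metric space and δ > 0. The map sending a nonempty compact subset K of X to N_δ(K), the smallest number of open sets of diameter at most δ needed to cover K, is upper semicontinuous with respect to the Hausdorff metric on the space of nonempty compact subsets of X. -/

import Mathlib

open Set Metric Filter MeasureTheory TopologicalSpace

noncomputable def coveringNumber {X : Type*} [MetricSpace X] (δ : ℝ) (F : Set X) : ℕ∞ :=
  sInf {m : ℕ∞ | ∃ C : Finset (Set X), (C.card : ℕ∞) = m ∧
    (∀ U ∈ C, IsOpen U ∧ Metric.diam U ≤ δ) ∧ F ⊆ ⋃ U ∈ C, U}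

noncomputable def packingNumber {X : Type*} [MetricSpace X] (δ : ℝ) (F : Set X) : ℕ∞ :=
  sSup {m : ℕ∞ | ∃ S : Finset X, (S.card : ℕ∞) = m ∧ (↑S : Set X) ⊆ F ∧
    (S : Set X).Pairwise fun x y => Disjoint (Metric.closedBall x δ) (Metric.closedBall y δ)}

noncomputable def upperBoxDim {X : Type*} [MetricSpace X] (F : Set X) : ℝ :=
  Filter.limsup (fun δ : ℝ => Real.log ((coveringNumber δ F).toNat) / (-Real.log δ))
    (nhdsWithin 0 (Set.Ioi 0))

noncomputable def lowerBoxDim {X : Type*} [MetricSpace X] (F : Set X) : ℝ :=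
  Filter.liminf (fun δ : ℝ => Real.log ((coveringNumber δ F).toNat) / (-Real.log δ))
    (nhdsWithin 0 (Set.Ioi 0))

noncomputable def packingDim {X : Type*} [MetricSpace X] (F : Set X) : ℝ :=
  sInf {s : ℝ | ∃ E : ℕ → Set X, F ⊆ ⋃ i, E i ∧ ∀ i, upperBoxDim (E i) ≤ s}

noncomputable def covDim (Y : Type*) [TopologicalSpace Y] : ℕ∞ :=
  sInf {m : ℕ∞ | ∀ (ι : Type) (U : ι → Set Y), (∀ i, IsOpen (U i)) → (⋃ i, U i) = Set.univ →
    ∃ (κ : Type) (V : κ → Set Y), (∀ j, IsOpen (V j)) ∧ (⋃ j, V j) = Set.univ ∧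
      (∀ j, ∃ i, V j ⊆ U i) ∧ ∀ y : Y, ENat.card {j : κ // y ∈ V j} ≤ m + 1}

theorem stmt0 {X : Type*} [MetricSpace X] [CompactSpace X] (δ : ℝ) (hδ : 0 < δ) :
    UpperSemicontinuous
      (fun K : TopologicalSpace.NonemptyCompacts X => coveringNumber δ (K : Set X)) := by
  intro K y hy
  rw [show (fun K : TopologicalSpace.NonemptyCompacts X => coveringNumber δ (K : Set X)) K
      = coveringNumber δ (K : Set X) from rfl, _root_.coveringNumber, sInf_lt_iff] at hy
  obtain ⟨m, ⟨C, hcard, hC, hcov⟩, hmy⟩ := hy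
  have hopen : IsOpen (⋃ U ∈ C, U) :=
    isOpen_biUnion fun U hU => (hC U hU).1
  obtain ⟨ε, hε, hsub⟩ := K.isCompact.exists_thickening_subset_open hopen hcov
  filter_upwards [Metric.ball_mem_nhds K hε] with K' hK'
  have hK'sub : (K' : Set X) ⊆ ⋃ U ∈ C, U := by
    refine subset_trans (fun x hx => ?_) hsub
    exact (Metric.mem_thickening_iff_infDist_lt K.nonempty).mpr
      (lt_of_le_of_lt
        (Metric.infDist_le_hausdorffDist_of_mem hx
          (Metric.hausdorffEdist_ne_top_of_nonempty_of_bounded K'.nonempty K.nonempty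
            K'.isCompact.isBounded K.isCompact.isBounded)) hK')
  calc coveringNumber δ (K' : Set X) ≤ m := sInf_le ⟨C, hcard, hC, hK'sub⟩
    _ < y := hmy
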